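/- Let (K, O, k) be a p-modular system with k algebraically closed, and let σ ∈ Gal(K/Q_p) fix a uniformizer π of O and induce a positive power of Frobenius on k = O/(π). Then the inclusion O^⟨σ⟩/π·O^⟨σ⟩ ⊆ k^⟨σ̄⟩ is an equality, where σ̄ denotes the induced automorphism on k; in particular (K^⟨σ⟩, O^⟨σ⟩, k^⟨σ̄⟩) is a p-modular system with finite residue field. -/

import Mathlib

open IsLocalRing Polynomial

/-- The inclusion `O^⟨σ⟩/π·O^⟨σ⟩ ⊆ k^⟨σ̄⟩` is an equality: every element of the residue
field fixed by the induced automorphism `σ̄ = (x ↦ x^q)` lifts to a `σ`-fixed element of `O`;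
moreover the fixed subfield `k^⟨σ̄⟩` is finite. -/
theorem stmt_3 (p : ℕ) [Fact p.Prime]
    (O : Type*) [CommRing O] [IsDomain O] [IsDiscreteValuationRing O]
    [IsAdicComplete (maximalIdeal O) O]
    (K : Type*) [Field K] [Algebra O K] [IsFractionRing O K] [CharZero K]
    [IsAlgClosed (ResidueField O)] [CharP (ResidueField O) p]
    (π : O) (hπ : Irreducible π)
    (σ : K ≃+* K) (hσO : ∀ x : O, ∃ y : O, σ (algebraMap O K x) = algebraMap O K y)
    (σO : O ≃+* O) (hσσO : ∀ x : O, algebraMap O K (σO x) = σ (algebraMap O K x))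
    (hσπ : σO π = π)
    (n : ℕ) (hn : 1 ≤ n) (q : ℕ) (hq : q = p ^ n)
    (hσres : ∀ x : O, residue O (σO x) = residue O x ^ q) :
    (∀ z : ResidueField O, z ^ q = z →
        ∃ y : O, σO y = y ∧ residue O y = z) ∧
      Finite {z : ResidueField O // z ^ q = z} := by
  classical
  have hq1 : 1 < q := by
    subst hq
    exact Nat.one_lt_pow (by omega) (Fact.out : p.Prime).one_lt
  set I : Ideal O := Ideal.span {π} with hI
  have hImax : maximalIdeal O = I :=
    (IsDiscreteValuationRing.irreducible_iff_uniformizer π).mp hπ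
  -- the residue of π is 0
  have hπ0 : residue O π = 0 :=
    Ideal.Quotient.eq_zero_iff_mem.mpr (hImax ▸ Ideal.mem_span_singleton_self π)
  -- step 0 : x ↦ x^q - x is surjective on the residue field, up to lifting
  have step0 : ∀ x : O, ∃ s : O, σO s - s - x ∈ maximalIdeal O := by
    intro x
    have hdeg : (X ^ q - X - C (residue O x) : (ResidueField O)[X]).degree = q := by
      have h1 : (X + C (residue O x) : (ResidueField O)[X]).degree = 1 :=
        degree_X_add_C _
      have : (X ^ q - X - C (residue O x) : (ResidueField O)[X])
          = X ^ q - (X + C (residue O x)) := by ring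
      rw [this, degree_sub_eq_left_of_degree_lt, degree_X_pow]
      rw [degree_X_pow, h1]
      exact_mod_cast hq1
    obtain ⟨r, hr⟩ := IsAlgClosed.exists_root (X ^ q - X - C (residue O x)) (by
      rw [hdeg]; exact_mod_cast (by omega : q ≠ 0))
    obtain ⟨s, hs⟩ := Ideal.Quotient.mk_surjective (I := maximalIdeal O) r
    refine ⟨s, Ideal.Quotient.eq_zero_iff_mem.mp ?_⟩
    show residue O (σO s - s - x) = 0
    have hres : residue O s = r := hs
    have heq : residue O (σO s - s - x) = r ^ q - r - residue O x := by
      simp [map_sub, hσres, hres]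
    rw [heq]
    simpa [IsRoot, eval_sub, eval_pow] using hr
  -- σO preserves powers of I
  have hσI : ∀ (m : ℕ) (x : O), x ∈ I ^ m → σO x ∈ I ^ m := by
    intro m x hx
    rw [hI, Ideal.span_singleton_pow, Ideal.mem_span_singleton] at hx ⊢
    obtain ⟨t, ht⟩ := hx
    exact ⟨σO t, by rw [ht, map_mul, map_pow, hσπ]⟩
  -- key : σO - id is surjective on O
  have key : ∀ c : O, ∃ t : O, σO t - t = c := by
    intro c
    have step : ∀ (m : ℕ) (x : O), σO x - x - c ∈ I ^ m →
        ∃ y : O, (σO y - y - c ∈ I ^ (m + 1)) ∧ y - x ∈ I ^ m := by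
      intro m x hx
      rw [hI, Ideal.span_singleton_pow, Ideal.mem_span_singleton] at hx
      obtain ⟨d, hd⟩ := hx
      obtain ⟨s, hs⟩ := step0 d
      rw [hImax, hI, Ideal.mem_span_singleton] at hs
      obtain ⟨e, he⟩ := hs
      refine ⟨x - π ^ m * s, ?_, ?_⟩
      · rw [hI, Ideal.span_singleton_pow, Ideal.mem_span_singleton]
        refine ⟨-e, ?_⟩
        have hmap : σO (x - π ^ m * s) = σO x - π ^ m * σO s := by
          rw [map_sub, map_mul, map_pow, hσπ]
        rw [hmap]
        ring_nf
        ring_nf at hd he ⊢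
        linear_combination hd - π ^ m * he
      · rw [hI, Ideal.span_singleton_pow, Ideal.mem_span_singleton]
        exact ⟨-s, by ring⟩
    -- build the Cauchy sequence
    let P : ℕ → O → Prop := fun m x => σO x - x - c ∈ I ^ m
    have h0 : P 0 0 := by simp [P]
    let F : ∀ m : ℕ, {x : O // P m x} := fun m =>
      Nat.rec ⟨0, h0⟩
        (fun m prev =>
          ⟨Classical.choose (step m prev.1 prev.2),
            (Classical.choose_spec (step m prev.1 prev.2)).1⟩) m
    have hdiff : ∀ m : ℕ, (F (m + 1)).1 - (F m).1 ∈ I ^ m := fun m =>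
      (Classical.choose_spec (step m (F m).1 (F m).2)).2
    have hdiff' : ∀ m n : ℕ, m ≤ n → (F n).1 - (F m).1 ∈ I ^ m := by
      intro m n hmn
      induction n with
      | zero =>
        obtain rfl : m = 0 := Nat.le_zero.mp hmn
        simp
      | succ k ih =>
        rcases Nat.lt_or_ge m (k + 1) with h | h
        · have h1 := ih (Nat.lt_succ_iff.mp h)
          have h2 : (F (k + 1)).1 - (F k).1 ∈ I ^ m :=
            Ideal.pow_le_pow_right (Nat.lt_succ_iff.mp h) (hdiff k)
          have := Ideal.add_mem _ h1 h2
          simpa using this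
        · obtain rfl : m = k + 1 := le_antisymm hmn h
          simp
    have hsmul : ∀ m : ℕ, ((maximalIdeal O) ^ m • ⊤ : Submodule O O) = I ^ m := by
      intro m
      rw [smul_eq_mul, Ideal.mul_top, hImax]
    obtain ⟨L, hL⟩ := IsPrecomplete.prec (IsAdicComplete.toIsPrecomplete (I := maximalIdeal O))
      (f := fun m => (F m).1) (by
        intro m n hmn
        rw [SModEq.sub_mem, hsmul]
        simpa using Submodule.neg_mem _ (hdiff' m n hmn))
    refine ⟨L, ?_⟩
    have hmem : ∀ m : ℕ, σO L - L - c ∈ I ^ m := by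
      intro m
      have h1 : L - (F m).1 ∈ I ^ m := by
        have := hL m
        rw [SModEq.sub_mem, hsmul] at this
        simpa using Submodule.neg_mem _ this
      have h2 : σO L - σO (F m).1 ∈ I ^ m := by
        have := hσI m _ h1
        rwa [map_sub] at this
      have h3 := (F m).2
      have : σO L - L - c =
          (σO (F m).1 - (F m).1 - c) + (σO L - σO (F m).1) - (L - (F m).1) := by ring
      rw [this]
      exact Submodule.sub_mem _ (Submodule.add_mem _ h3 h2) h1
    have := IsHausdorff.haus (IsAdicComplete.toIsHausdorff (I := maximalIdeal O))
      (σO L - L - c) (by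
        intro m
        rw [SModEq.zero, hsmul]
        exact hmem m)
    have h4 : σO L - L - c = 0 := this
    linear_combination h4
  constructor
  · intro z hz
    obtain ⟨a, ha⟩ := Ideal.Quotient.mk_surjective (I := maximalIdeal O) z
    have ha' : residue O a = z := ha
    have hmem : σO a - a ∈ maximalIdeal O := by
      refine Ideal.Quotient.eq_zero_iff_mem.mp ?_
      show residue O (σO a - a) = 0
      have heq : residue O (σO a - a) = z ^ q - z := by
        simp [map_sub, hσres, ha']
      rw [heq, hz, sub_self]
    rw [hImax, hI, Ideal.mem_span_singleton] at hmem
    obtain ⟨c, hc⟩ := hmem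
    obtain ⟨t, ht⟩ := key (-c)
    refine ⟨a + π * t, ?_, ?_⟩
    · have : σO (a + π * t) = σO a + π * σO t := by
        rw [map_add, map_mul, hσπ]
      rw [this]
      linear_combination hc + π * ht
    · rw [map_add, map_mul, hπ0, ha', zero_mul, add_zero]
  · have hfin : {z : ResidueField O | z ^ q = z}.Finite := by
      have hne : (X ^ q - X : (ResidueField O)[X]) ≠ 0 := by
        intro h
        have := congrArg (fun f => Polynomial.coeff f q) h
        simp only [coeff_sub, coeff_X_pow, coeff_X, if_pos rfl] at this
        rw [if_neg (by omega : ¬(1 = q))] at this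
        simp at this
      refine Set.Finite.subset (Polynomial.finite_setOf_isRoot hne) ?_
      intro z hz
      simp only [Set.mem_setOf_eq, IsRoot, eval_sub, eval_pow, eval_X]
      rw [hz, sub_self]
    exact hfin.to_subtype
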